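/- Let R be a commutative ring, v a pre-valuation on R, d ∈ ℕ, and s ∈ R. Let v^♯ be the pre-valuation on R[x] defined by v^♯(Σ_i c_i x^i) = min_i ( v(c_i) + i·d ), and let v^+ be the pushforward of v^♯ along the evaluation map R[x] → R sending x to s, i.e., v^+(u) = sup{ v^♯(y) : y ∈ R[x], y(s) = u }. Then: (1) v^+(u) ≥ v(u) for all u ∈ R; (2) if d > v(s), then v^+(s) ≥ d > v(s), so v^+ ≠ v; (3) if d ≤ v(s), then v^+ = v. -/

import Mathlib

/-- A pre-valuation on a commutative ring `R`. -/
structure PreVal (R : Type*) [CommRing R] where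
  v : R → ℕ∞
  map_zero : v 0 = ⊤
  mul_le : ∀ x y : R, v x + v y ≤ v (x * y)
  min_le_add : ∀ x y : R, min (v x) (v y) ≤ v (x + y)
  add_eq : ∀ x y : R, v x ≠ v y → v (x + y) = min (v x) (v y)

/-- The pre-valuation `v^♯` on `R[x]`: `v^♯(Σ c_i x^i) = min_i (v(c_i) + i·d)`. -/
noncomputable def vsharp {R : Type*} [CommRing R] (v : PreVal R) (d : ℕ)
    (p : Polynomial R) : ℕ∞ :=
  ⨅ i : ℕ, v.v (p.coeff i) + ((i * d : ℕ) : ℕ∞)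

/-- The pushforward `v^+` of `v^♯` along the evaluation map `R[x] → R`, `x ↦ s`:
`v^+(u) = sup { v^♯(y) : y(s) = u }`. -/
noncomputable def vplus {R : Type*} [CommRing R] (v : PreVal R) (s : R) (d : ℕ)
    (u : R) : ℕ∞ :=
  sSup (vsharp v d '' {p : Polynomial R | Polynomial.eval s p = u})

lemma vsharp_C {R : Type*} [CommRing R] (v : PreVal R) (d : ℕ) (u : R) :
    vsharp v d (Polynomial.C u) = v.v u := by
  apply le_antisymm
  · simpa [vsharp] using iInf_le (fun i : ℕ => v.v ((Polynomial.C u).coeff i) + ((i * d : ℕ) : ℕ∞)) 0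
  · refine le_iInf fun i => ?_
    rcases eq_or_ne i 0 with rfl | hi
    · simp
    · simp [Polynomial.coeff_C, hi, v.map_zero]

lemma preval_sum {R : Type*} [CommRing R] (v : PreVal R) {ι : Type*} (t : Finset ι)
    (f : ι → R) : (⨅ i ∈ t, v.v (f i)) ≤ v.v (∑ i ∈ t, f i) := by
  classical
  induction t using Finset.induction_on with
  | empty => simp [v.map_zero]
  | insert a t' hx ih =>
    rw [Finset.sum_insert hx]
    refine le_trans ?_ (v.min_le_add _ _)
    simp only [Finset.iInf_insert]
    exact min_le_min (le_refl _) ih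

lemma preval_pow {R : Type*} [CommRing R] (v : PreVal R) {s : R} {d : ℕ}
    (hd : (d : ℕ∞) ≤ v.v s) (i : ℕ) : ((i * d : ℕ) : ℕ∞) ≤ v.v (s ^ i) := by
  induction i with
  | zero => simp
  | succ n ih =>
    have : ((((n + 1) * d : ℕ)) : ℕ∞) = ((n * d : ℕ) : ℕ∞) + (d : ℕ∞) := by
      push_cast; ring
    rw [this, pow_succ]
    exact le_trans (add_le_add ih hd) (v.mul_le _ _)

lemma vsharp_le_eval {R : Type*} [CommRing R] (v : PreVal R) {s : R} {d : ℕ}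
    (hd : (d : ℕ∞) ≤ v.v s) (p : Polynomial R) :
    vsharp v d p ≤ v.v (p.eval s) := by
  rw [Polynomial.eval_eq_sum_range]
  refine le_trans ?_ (preval_sum v _ _)
  refine le_iInf fun i => le_iInf fun _ => ?_
  refine le_trans (iInf_le _ i) ?_
  exact le_trans (add_le_add (le_refl _) (preval_pow v hd i)) (v.mul_le _ _)

/-- (1) `v⁺ ≥ v`; (2) if `d > v s` then `v⁺ s ≥ d > v s`, so `v⁺ ≠ v`;
(3) if `d ≤ v s` then `v⁺ = v`. -/
theorem stmt10 {R : Type*} [CommRing R] (v : PreVal R) (s : R) (d : ℕ) :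
    (∀ u : R, v.v u ≤ vplus v s d u) ∧
    (v.v s < (d : ℕ∞) → (d : ℕ∞) ≤ vplus v s d s ∧ vplus v s d ≠ v.v) ∧
    ((d : ℕ∞) ≤ v.v s → vplus v s d = v.v) := by
  have h1 : ∀ u : R, v.v u ≤ vplus v s d u := by
    intro u
    rw [← vsharp_C v d u]
    exact le_sSup ⟨Polynomial.C u, by simp, rfl⟩
  refine ⟨h1, ?_, ?_⟩
  · intro hlt
    have hX : (d : ℕ∞) ≤ vsharp v d (Polynomial.X : Polynomial R) := by
      refine le_iInf fun i => ?_
      rcases eq_or_ne i 1 with rfl | hi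
      · simpa using le_add_self
      · rw [Polynomial.coeff_X, if_neg (fun h => hi h.symm)]
        simp [v.map_zero]
    have hmem : vsharp v d (Polynomial.X : Polynomial R) ∈
        vsharp v d '' {p : Polynomial R | Polynomial.eval s p = s} :=
      ⟨Polynomial.X, by simp, rfl⟩
    have hle : (d : ℕ∞) ≤ vplus v s d s := le_trans hX (le_sSup hmem)
    refine ⟨hle, fun h => ?_⟩
    have := hle
    rw [h] at this
    exact absurd this (not_le_of_gt hlt)
  · intro hd
    funext u
    refine le_antisymm ?_ (h1 u)
    refine sSup_le ?_
    rintro _ ⟨p, hp, rfl⟩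
    have := vsharp_le_eval v hd p
    rwa [hp] at this
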